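/- Any vertex of a directed graph can be the entrance of at most one superbubble; similarly, any vertex can be the exit of at most one superbubble. -/

import Mathlib

/-- `v` is reachable from `s` by a directed path whose internal vertices
(all vertices except the endpoints) avoid `avoid`. -/
def ReachWithout {V : Type*} (E : V → V → Prop) (avoid s v : V) : Prop :=
  s = v ∨ ∃ w, Relation.ReflTransGen (fun a b => E a b ∧ b ≠ avoid) s w ∧ E w v

/-- `t` is reachable from `v` by a directed path whose internal vertices avoid `avoid`. -/
def CoReachWithout {V : Type*} (E : V → V → Prop) (avoid v t : V) : Prop :=
  v = t ∨ ∃ w, E v w ∧ Relation.ReflTransGen (fun a b => E a b ∧ a ≠ avoid) w t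

/-- The subgraph induced by `U` is acyclic. -/
def AcyclicOn {V : Type*} (E : V → V → Prop) (U : Set V) : Prop :=
  ∀ v, ¬ Relation.TransGen (fun a b => E a b ∧ a ∈ U ∧ b ∈ U) v v

/-- The directed graph is acyclic. -/
def Acyclic {V : Type*} (E : V → V → Prop) : Prop :=
  ∀ v, ¬ Relation.TransGen E v v

/-- The reachability, matching and acyclicity conditions of a superbubble
(Definition 1, without minimality). -/
def SBCore {V : Type*} (E : V → V → Prop) (s t : V) : Prop :=
  s ≠ t ∧ Relation.TransGen E s t ∧
  (∀ v, ReachWithout E t s v ↔ CoReachWithout E s v t) ∧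
  AcyclicOn E {v | ReachWithout E t s v}

/-- `⟨s, t⟩` is a superbubble: reachability, matching, acyclicity and minimality. -/
def Superbubble {V : Type*} (E : V → V → Prop) (s t : V) : Prop :=
  SBCore E s t ∧ ∀ t', ReachWithout E t s t' → t' ≠ t → ¬ SBCore E s t'


section SuperbubbleUnique

variable {V : Type*} {E : V → V → Prop}

/-- Walks from `s` to `v` whose internal vertices all satisfy `P`. -/
def RW (E : V → V → Prop) (P : V → Prop) (s v : V) : Prop :=
  s = v ∨ ∃ w, Relation.ReflTransGen (fun a b => E a b ∧ P b) s w ∧ E w v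

lemma rw_refl (P : V → Prop) (s : V) : RW E P s s := Or.inl rfl

lemma rw_single {P : V → Prop} {s v : V} (h : E s v) : RW E P s v :=
  Or.inr ⟨s, Relation.ReflTransGen.refl, h⟩

lemma rw_cons {P : V → Prop} {s b v : V} (h : E s b) (hb : P b) (hr : RW E P b v) :
    RW E P s v := by
  rcases hr with rfl | ⟨w, hw, hwv⟩
  · exact rw_single h
  · exact Or.inr ⟨w, Relation.ReflTransGen.head ⟨h, hb⟩ hw, hwv⟩

lemma rw_snoc {P : V → Prop} {s w v : V} (hr : RW E P s w) (hw : P w) (h : E w v) :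
    RW E P s v := by
  rcases hr with rfl | ⟨u, hu, huw⟩
  · exact rw_single h
  · exact Or.inr ⟨w, hu.tail ⟨huw, hw⟩, h⟩

lemma rw_trans {P : V → Prop} {a b c : V} (h1 : RW E P a b) (hb : P b) (h2 : RW E P b c) :
    RW E P a c := by
  rcases h2 with rfl | ⟨w, hw, hwc⟩
  · exact h1
  · rcases h1 with rfl | ⟨u, hu, hub⟩
    · exact Or.inr ⟨w, hw, hwc⟩
    · exact Or.inr ⟨w, (hu.tail ⟨hub, hb⟩).trans hw, hwc⟩

lemma rw_mono {P Q : V → Prop} (hPQ : ∀ v, P v → Q v) {s v : V} (h : RW E P s v) :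
    RW E Q s v := by
  rcases h with rfl | ⟨w, hw, hwv⟩
  · exact Or.inl rfl
  · exact Or.inr ⟨w, Relation.ReflTransGen.mono (fun a b hab => ⟨hab.1, hPQ _ hab.2⟩) _ _ hw, hwv⟩

lemma rw_of_transGen {s v : V} (h : Relation.TransGen E s v) :
    RW E (fun _ => True) s v := by
  induction h with
  | single h => exact rw_single h
  | tail _ h ih => exact rw_snoc ih trivial h

/-- Trim a walk at the first occurrence of `c`. -/
lemma rw_trim {P : V → Prop} {s v : V} (h : RW E P s v) (c : V) :
    RW E (fun z => P z ∧ z ≠ c) s v ∨ RW E (fun z => P z ∧ z ≠ c) s c := by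
  rcases h with rfl | ⟨w, hw, hwv⟩
  · exact Or.inl (rw_refl _ s)
  · induction hw using Relation.ReflTransGen.head_induction_on with
    | refl => exact Or.inl (rw_single hwv)
    | head hxy hyw ih =>
      rename_i x y
      rcases eq_or_ne y c with rfl | hyc
      · exact Or.inr (rw_single hxy.1)
      · rcases ih with h1 | h1
        · exact Or.inl (rw_cons hxy.1 ⟨hxy.2, hyc⟩ h1)
        · exact Or.inr (rw_cons hxy.1 ⟨hxy.2, hyc⟩ h1)

/-- Trim a walk at the last occurrence of `c`. -/
lemma rw_trim_last {P : V → Prop} {s v : V} (h : RW E P s v) (c : V) :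
    RW E (fun z => P z ∧ z ≠ c) s v ∨ RW E (fun z => P z ∧ z ≠ c) c v := by
  rcases h with rfl | ⟨w, hw, hwv⟩
  · exact Or.inl (rw_refl _ s)
  · induction hw using Relation.ReflTransGen.head_induction_on with
    | refl => exact Or.inl (rw_single hwv)
    | head hxy hyw ih =>
      rename_i x y
      rcases ih with h1 | h1
      · rcases eq_or_ne y c with rfl | hyc
        · exact Or.inr h1
        · exact Or.inl (rw_cons hxy.1 ⟨hxy.2, hyc⟩ h1)
      · exact Or.inr h1

lemma reach_or {s v : V} (h : Relation.TransGen E s v) (a : V) :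
    RW E (fun z => z ≠ a) s v ∨ RW E (fun z => z ≠ v) s a := by
  rcases rw_trim (rw_of_transGen h) a with h1 | h1
  · exact Or.inl (rw_mono (fun z hz => hz.2) h1)
  · rcases rw_trim h1 v with h2 | h2
    · exact Or.inr (rw_mono (fun z hz => hz.2) h2)
    · exact Or.inl (rw_mono (fun z hz => hz.1.2) h2)

lemma rw_transGen {P : V → Prop} {a b : V} (h : RW E P a b) (hne : a ≠ b) :
    Relation.TransGen E a b := by
  rcases h with rfl | ⟨w, hw, hwb⟩
  · exact absurd rfl hne
  · exact Relation.TransGen.tail' (Relation.ReflTransGen.mono (fun x y hxy => hxy.1) _ _ hw) hwb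

lemma shiftF {P : V → Prop} {s w v : V}
    (h : Relation.ReflTransGen (fun a b => E a b ∧ P b) s w) (hwv : E w v) :
    ∃ w', E s w' ∧ Relation.ReflTransGen (fun a b => E a b ∧ P a) w' v := by
  induction h using Relation.ReflTransGen.head_induction_on with
  | refl => exact ⟨v, hwv, Relation.ReflTransGen.refl⟩
  | head hxy _ ih =>
    obtain ⟨w', hw', hr⟩ := ih
    exact ⟨_, hxy.1, Relation.ReflTransGen.head ⟨hw', hxy.2⟩ hr⟩

lemma shiftB {P : V → Prop} {w v : V}
    (h : Relation.ReflTransGen (fun a b => E a b ∧ P a) w v) :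
    ∀ s, E s w → ∃ w', Relation.ReflTransGen (fun a b => E a b ∧ P b) s w' ∧ E w' v := by
  induction h using Relation.ReflTransGen.head_induction_on with
  | refl => exact fun s hs => ⟨s, Relation.ReflTransGen.refl, hs⟩
  | head hxy _ ih =>
    intro s hs
    obtain ⟨w', hr, hw'v⟩ := ih _ hxy.1
    exact ⟨w', Relation.ReflTransGen.head ⟨hs, hxy.2⟩ hr, hw'v⟩

lemma coReach_iff {x u v : V} :
    CoReachWithout E x u v ↔ RW E (fun b => b ≠ x) u v := by
  constructor
  · rintro (rfl | ⟨w, huw, hr⟩)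
    · exact rw_refl _ u
    · obtain ⟨w', h1, h2⟩ := shiftB hr u huw
      exact Or.inr ⟨w', h1, h2⟩
  · rintro (rfl | ⟨w, hr, hwv⟩)
    · exact Or.inl rfl
    · obtain ⟨w', h1, h2⟩ := shiftF hr hwv
      exact Or.inr ⟨w', h1, h2⟩

/-- Convert a `t`-avoiding walk between vertices of `U = {v | RW E (≠t) s₀ v}` into a
walk through the induced subgraph on `U`. -/
lemma lemA {t s₀ a b : V} (ha : RW E (fun z => z ≠ t) s₀ a) (hat : a ≠ t)
    (hb : RW E (fun z => z ≠ t) s₀ b) (hne : a ≠ b)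
    (hab : RW E (fun z => z ≠ t) a b) :
    Relation.TransGen
      (fun x y => E x y ∧ RW E (fun z => z ≠ t) s₀ x ∧ RW E (fun z => z ≠ t) s₀ y) a b := by
  rcases hab with rfl | ⟨w, hw, hwb⟩
  · exact absurd rfl hne
  · have key : RW E (fun z => z ≠ t) s₀ a → a ≠ t →
        Relation.ReflTransGen
          (fun x y => E x y ∧ RW E (fun z => z ≠ t) s₀ x ∧ RW E (fun z => z ≠ t) s₀ y) a w ∧
        RW E (fun z => z ≠ t) s₀ w := by
      clear ha hat hne
      induction hw using Relation.ReflTransGen.head_induction_on with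
      | refl => exact fun hx _ => ⟨Relation.ReflTransGen.refl, hx⟩
      | head hpq hqw ih =>
        intro hp hpt
        have hq : RW E (fun z => z ≠ t) s₀ _ := rw_snoc hp hpt hpq.1
        obtain ⟨hr, hwU⟩ := ih hq hpq.2
        exact ⟨Relation.ReflTransGen.head ⟨hpq.1, hp, hq⟩ hr, hwU⟩
    obtain ⟨hr, hwU⟩ := key ha hat
    exact Relation.TransGen.tail' hr ⟨hwb, hwU, hb⟩

/-- `U` is closed backwards along edges not entering `s`. -/
lemma coClose {s t : V} (hm : ∀ v, RW E (fun z => z ≠ t) s v ↔ RW E (fun z => z ≠ s) v t)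
    {x y : V} (hxy : E x y) (hys : y ≠ s) (hy : RW E (fun z => z ≠ t) s y) :
    RW E (fun z => z ≠ t) s x :=
  (hm x).2 (rw_cons hxy hys ((hm y).1 hy))

lemma rtg_src_ne {s e y : V}
    (h : Relation.ReflTransGen (fun a b => E a b ∧ a ≠ s) y e) (hes : e ≠ s) : y ≠ s := by
  rcases Relation.ReflTransGen.cases_head h with rfl | ⟨c, hc, _⟩
  · exact hes
  · exact hc.2

/-- Convert an `s`-avoiding co-walk ending in `U = {v | RW E (≠t) s v}` into a
walk through the induced subgraph on `U`. -/
lemma lemB {s t : V} (hm : ∀ v, RW E (fun z => z ≠ t) s v ↔ RW E (fun z => z ≠ s) v t)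
    {v e : V} (he : RW E (fun z => z ≠ t) s e) (hes : e ≠ s)
    (hv : RW E (fun z => z ≠ t) s v) (hco : RW E (fun z => z ≠ s) v e) (hne : v ≠ e) :
    Relation.TransGen
      (fun x y => E x y ∧ RW E (fun z => z ≠ t) s x ∧ RW E (fun z => z ≠ t) s y) v e := by
  have hco' : CoReachWithout E s v e := coReach_iff.2 hco
  rcases hco' with rfl | ⟨w, hvw, hr⟩
  · exact absurd rfl hne
  · have key : Relation.ReflTransGen
        (fun x y => E x y ∧ RW E (fun z => z ≠ t) s x ∧ RW E (fun z => z ≠ t) s y) w e ∧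
        RW E (fun z => z ≠ t) s w := by
      clear hvw hne hco
      induction hr using Relation.ReflTransGen.head_induction_on with
      | refl => exact ⟨Relation.ReflTransGen.refl, he⟩
      | head hpq hqe ih =>
        obtain ⟨hr', hq⟩ := ih
        have hqs := rtg_src_ne hqe hes
        have hp := coClose hm hpq.1 hqs hq
        exact ⟨Relation.ReflTransGen.head ⟨hpq.1, hp, hq⟩ hr', hp⟩
    obtain ⟨hr', hwU⟩ := key
    exact Relation.TransGen.head' ⟨hvw, hv, hwU⟩ hr'

/-- The key lemma for exit uniqueness: two different entrances of superbubbles with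
the same exit, one inside the other's interior, are impossible. -/
lemma exit_key {s₁ s₂ t : V} (h₁ : Superbubble E s₁ t) (h₂ : Superbubble E s₂ t)
    (hne : s₁ ≠ s₂) (hmem : RW E (fun z => z ≠ t) s₂ s₁) : False := by
  obtain ⟨⟨hs₁t, htr₁, hm₁, hac₁⟩, hmin₁⟩ := h₁
  obtain ⟨⟨hs₂t, htr₂, hm₂, hac₂⟩, hmin₂⟩ := h₂
  have hm₁' : ∀ v, RW E (fun z => z ≠ t) s₁ v ↔ RW E (fun z => z ≠ s₁) v t :=
    fun v => (hm₁ v).trans coReach_iff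
  have hm₂' : ∀ v, RW E (fun z => z ≠ t) s₂ v ↔ RW E (fun z => z ≠ s₂) v t :=
    fun v => (hm₂ v).trans coReach_iff
  by_cases hs₂U₁ : RW E (fun z => z ≠ t) s₁ s₂
  · -- both interiors contain the other entrance: a cycle inside U₂.
    have T1 := lemA (rw_refl _ s₂) hs₂t hmem hne.symm hmem
    have T2 := lemA hmem hs₁t (rw_refl _ s₂) hne hs₂U₁
    exact hac₂ s₂ (T1.trans T2)
  · -- s₂ ∉ U₁ : then ⟨s₂, s₁⟩ satisfies SBCore, contradicting minimality of ⟨s₂, t⟩.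
    have hnr : ¬ RW E (fun z => z ≠ s₁) s₂ t := fun h => hs₂U₁ ((hm₁' s₂).2 h)
    have hWsub : ∀ v, RW E (fun z => z ≠ s₁) s₂ v → RW E (fun z => z ≠ t) s₂ v := by
      intro v hv
      rcases eq_or_ne v t with rfl | hvt
      · exact absurd hv hnr
      · rcases rw_trim hv t with h | h
        · exact rw_mono (fun z hz => hz.2) h
        · exact absurd (rw_mono (fun z hz => hz.1) h) hnr
    have hS : RW E (fun z => z ≠ s₂) s₁ t := (hm₂' s₁).1 hmem
    have hmem' : RW E (fun z => z ≠ s₁) s₂ s₁ := by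
      rcases rw_trim hmem s₁ with h | h
      · exact rw_mono (fun z hz => hz.2) h
      · exact rw_mono (fun z hz => hz.2) h
    have hcore : SBCore E s₂ s₁ := by
      refine ⟨hne.symm, rw_transGen hmem hne.symm, ?_, ?_⟩
      · intro v
        rw [coReach_iff]
        show RW E (fun z => z ≠ s₁) s₂ v ↔ RW E (fun z => z ≠ s₂) v s₁
        constructor
        · intro hv
          rcases eq_or_ne v s₁ with rfl | hvs₁
          · exact rw_refl _ v
          · have hvU₂ : RW E (fun z => z ≠ t) s₂ v := hWsub v hv
            have hQ : RW E (fun z => z ≠ s₂) v t := (hm₂' v).1 hvU₂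
            rcases rw_trim hQ s₁ with h | h
            · exact absurd (rw_trans hv hvs₁ (rw_mono (fun z hz => hz.2) h)) hnr
            · exact rw_mono (fun z hz => hz.1) h
        · intro hv
          rcases eq_or_ne v s₁ with rfl | hvs₁
          · exact hmem'
          · have hvU₂ : RW E (fun z => z ≠ t) s₂ v :=
              (hm₂' v).2 (rw_trans hv hne hS)
            rcases rw_trim_last hvU₂ s₁ with h | h
            · exact rw_mono (fun z hz => hz.2) h
            · have hA := lemA hmem hs₁t hvU₂ (Ne.symm hvs₁) (rw_mono (fun z hz => hz.1) h)
              have hB := lemB hm₂' hmem hne hvU₂ hv hvs₁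
              exact absurd (hA.trans hB) (hac₂ s₁)
      · intro v hcyc
        exact hac₂ v
          (Relation.TransGen.mono (fun a b hab => ⟨hab.1, hWsub a hab.2.1, hWsub b hab.2.2⟩) _ _ hcyc)
    exact hmin₂ s₁ hmem hs₁t hcore

end SuperbubbleUnique

/-- Any vertex can be the entrance of at most one superbubble, and
any vertex can be the exit of at most one superbubble. -/
theorem entrance_and_exit_unique {V : Type*} (E : V → V → Prop) :
    (∀ s t₁ t₂ : V, Superbubble E s t₁ → Superbubble E s t₂ → t₁ = t₂) ∧
    (∀ s₁ s₂ t : V, Superbubble E s₁ t → Superbubble E s₂ t → s₁ = s₂) := by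
  constructor
  · intro s t₁ t₂ h₁ h₂
    by_contra hne
    rcases reach_or h₂.1.2.1 t₁ with h | h
    · exact h₁.2 t₂ h (fun h' => hne h'.symm) h₂.1
    · exact h₂.2 t₁ h hne h₁.1
  · intro s₁ s₂ t h₁ h₂
    by_contra hne
    rcases reach_or h₂.1.2.1 s₁ with h | h
    · exact exit_key h₂ h₁ (Ne.symm hne) ((h₁.1.2.2.1 s₂).2 (coReach_iff.2 h))
    · exact exit_key h₁ h₂ hne h
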